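/- Let K := ℂ(x) be the field of rational functions over ℂ. Let ι be a finite type and (f i) a family of nonzero polynomials in ℂ[x] having no common root in ℂ. For a nonzero polynomial f, write ℂ[x][1/f] for the subring of K generated by the polynomials together with 1/f. Suppose G assigns to each pair (i, j) an invertible 2×2 matrix over K such that all entries of G i j and of (G i j)⁻¹ lie in ℂ[x][1/(f_i · f_j)], G i i = Id, and (G i j)·(G j k) = G i k for all i, j, k. Then there exists a family (A i) of invertible 2×2 matrices over K such that all entries of A i and of (A i)⁻¹ lie in ℂ[x][1/f_i], and (A i)⁻¹ · (G i j) · (A j) = Id for all i, j. -/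

import Mathlib

set_option synthInstance.maxHeartbeats 1000000
set_option maxHeartbeats 1600000
open Polynomial
open scoped Matrix


/-- `g ∈ ℂ[x][1/f] ⊂ ℂ(x)`: `g` can be written as `p / fⁿ` with `p` a polynomial. -/
def MemLocalization (f : Polynomial ℂ) (g : RatFunc ℂ) : Prop :=
  ∃ (p : Polynomial ℂ) (n : ℕ),
    g = algebraMap (Polynomial ℂ) (RatFunc ℂ) p / (algebraMap (Polynomial ℂ) (RatFunc ℂ) f) ^ n

namespace ML

noncomputable abbrev af : Polynomial ℂ →+* RatFunc ℂ := algebraMap (Polynomial ℂ) (RatFunc ℂ)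

lemma af_ne {f : Polynomial ℂ} (hf : f ≠ 0) : af f ≠ 0 := by
  simpa using hf

lemma poly (f p : Polynomial ℂ) : MemLocalization f (af p) := ⟨p, 0, by simp⟩

lemma zero (f : Polynomial ℂ) : MemLocalization f 0 := ⟨0, 0, by simp⟩

lemma one (f : Polynomial ℂ) : MemLocalization f 1 := ⟨1, 0, by simp⟩

lemma add {f : Polynomial ℂ} (hf : f ≠ 0) {g h : RatFunc ℂ}
    (hg : MemLocalization f g) (hh : MemLocalization f h) : MemLocalization f (g + h) := by
  obtain ⟨p, n, rfl⟩ := hg; obtain ⟨q, m, rfl⟩ := hh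
  refine ⟨p * f ^ m + q * f ^ n, n + m, ?_⟩
  have h0 : (af f) ^ n ≠ 0 := pow_ne_zero _ (af_ne hf)
  have h0' : (af f) ^ m ≠ 0 := pow_ne_zero _ (af_ne hf)
  rw [div_add_div _ _ h0 h0', map_add, map_mul, map_mul, map_pow, map_pow, pow_add]
  congr 1
  ring

lemma mul {f : Polynomial ℂ} (hf : f ≠ 0) {g h : RatFunc ℂ}
    (hg : MemLocalization f g) (hh : MemLocalization f h) : MemLocalization f (g * h) := by
  obtain ⟨p, n, rfl⟩ := hg; obtain ⟨q, m, rfl⟩ := hh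
  refine ⟨p * q, n + m, ?_⟩
  rw [div_mul_div_comm, map_mul, pow_add]

lemma smul {f p : Polynomial ℂ} (hf : f ≠ 0) {g : RatFunc ℂ} (hg : MemLocalization f g) :
    MemLocalization f (af p * g) := mul hf (poly f p) hg

lemma sum {f : Polynomial ℂ} (hf : f ≠ 0) {s : Finset (Fin 2)} {g : Fin 2 → RatFunc ℂ}
    (hg : ∀ k, MemLocalization f (g k)) : MemLocalization f (∑ k ∈ s, g k) := by
  classical
  induction s using Finset.induction with
  | empty => simpa using zero f
  | insert a s h ih => rw [Finset.sum_insert h]; exact add hf (hg _) ih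

/-- enlarge the denominator -/
lemma of_dvd {f h : Polynomial ℂ} (hh : h ≠ 0) (hd : f ∣ h) {g : RatFunc ℂ}
    (hg : MemLocalization f g) : MemLocalization h g := by
  obtain ⟨q, rfl⟩ := hd
  obtain ⟨p, n, rfl⟩ := hg
  have hf : f ≠ 0 := left_ne_zero_of_mul hh
  have hq : q ≠ 0 := right_ne_zero_of_mul hh
  refine ⟨p * q ^ n, n, ?_⟩
  have h0q : (af q) ^ n ≠ 0 := pow_ne_zero _ (af_ne hq)
  rw [map_mul, map_mul, map_pow, mul_pow, ← div_div, mul_comm (af p), mul_div_assoc,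
    mul_comm, mul_div_assoc, div_self h0q, mul_one]

/-- shift a factor out of the denominator -/
lemma shift {f h : Polynomial ℂ} (hf : f ≠ 0) {g : RatFunc ℂ}
    (hg : MemLocalization (f * h) g) : ∃ n : ℕ, MemLocalization h (af f ^ n * g) := by
  obtain ⟨p, n, rfl⟩ := hg
  refine ⟨n, p, n, ?_⟩
  have h0 : af f ≠ 0 := af_ne hf
  rw [map_mul, mul_pow, ← div_div, ← mul_div_assoc]
  congr 1
  rw [mul_comm]
  field_simp

lemma inv_pow_mem {f : Polynomial ℂ} (n : ℕ) : MemLocalization f ((af f) ^ n)⁻¹ :=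
  ⟨1, n, by rw [map_one, one_div]⟩

end ML

namespace ML

lemma denom_dvd_of_mem {f : Polynomial ℂ} {g : RatFunc ℂ} (hg : MemLocalization f g) :
    ∃ n : ℕ, g.denom ∣ f ^ n := by
  obtain ⟨p, n, rfl⟩ := hg
  refine ⟨n, ?_⟩
  have := RatFunc.denom_div_dvd p (f ^ n)
  rwa [map_pow] at this

lemma eq_polynomial {ι : Type*} [Finite ι] {f : ι → Polynomial ℂ}
    (hroot : ∀ z : ℂ, ∃ i, (f i).eval z ≠ 0) {g : RatFunc ℂ}
    (hg : ∀ i, MemLocalization (f i) g) : ∃ p : Polynomial ℂ, g = af p := by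
  have hnr : ∀ z : ℂ, g.denom.eval z ≠ 0 := by
    intro z hz
    obtain ⟨i, hi⟩ := hroot z
    obtain ⟨n, hn⟩ := denom_dvd_of_mem (hg i)
    obtain ⟨q, hq⟩ := hn
    have : (f i).eval z ^ n = 0 := by
      have := congrArg (Polynomial.eval z) hq
      simp only [Polynomial.eval_pow, Polynomial.eval_mul, hz, zero_mul] at this
      exact this
    exact hi (pow_eq_zero_iff'.mp this).1
  have hd : g.denom.degree ≤ 0 := by
    by_contra hdeg
    push_neg at hdeg
    obtain ⟨z, hz⟩ := Complex.exists_root hdeg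
    exact hnr z hz
  have hm := RatFunc.monic_denom g
  have : g.denom = 1 := by
    have h1 := Polynomial.eq_C_of_degree_le_zero hd
    rw [h1]
    have : g.denom.coeff 0 = 1 := by
      have hnd : g.denom.natDegree = 0 := Polynomial.natDegree_eq_zero_iff_degree_le_zero.mpr hd
      have := hm.leadingCoeff
      rwa [Polynomial.leadingCoeff, hnd] at this
    rw [this, map_one]
  refine ⟨g.num, ?_⟩
  conv_lhs => rw [← RatFunc.num_div_denom g]
  rw [this, map_one, div_one]

end ML

namespace ML

lemma raise {f : Polynomial ℂ} (hf : f ≠ 0) {g : RatFunc ℂ} {n N : ℕ} (h : n ≤ N)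
    {p : Polynomial ℂ} (hg : g = af p / af f ^ n) : ∃ q, g = af q / af f ^ N := by
  obtain ⟨d, rfl⟩ : ∃ d, N = n + d := ⟨N - n, by omega⟩
  refine ⟨p * f ^ d, ?_⟩
  subst hg
  rw [map_mul, map_pow,
    div_eq_div_iff (pow_ne_zero _ (af_ne hf)) (pow_ne_zero _ (af_ne hf)), pow_add]
  ring

lemma shift' {h : Polynomial ℂ} {f : Polynomial ℂ} (hf : f ≠ 0) {g : RatFunc ℂ}
    {p : Polynomial ℂ} {n : ℕ} (hg : g = af p / af (f * h) ^ n) :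
    MemLocalization h (af f ^ n * g) := by
  subst hg
  refine ⟨p, n, ?_⟩
  rw [map_mul, mul_pow, ← div_div, ← mul_div_assoc]
  congr 1
  rw [mul_comm]
  exact div_mul_cancel₀ _ (pow_ne_zero n (af_ne hf))

end ML



/-- triviality of rank-2 bundles on `𝔸¹`, Čech-cocycle form.  Let `(f i)`
be finitely many nonzero polynomials with no common root, and let `G i j` be an invertible
cocycle of `2×2` matrices over `ℂ(x)` whose entries (and those of the inverses) are regular
on `U_i ∩ U_j`, i.e. lie in `ℂ[x][1/(f_i·f_j)]`.  Then there are invertible matrices `A i`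
regular on `U_i` with regular inverses such that `(A i)⁻¹ * G i j * A j = 1`. -/
theorem stmt8 {ι : Type*} [Finite ι] (f : ι → Polynomial ℂ) (hf : ∀ i, f i ≠ 0)
    (hroot : ∀ z : ℂ, ∃ i, (f i).eval z ≠ 0)
    (G : ι → ι → Matrix (Fin 2) (Fin 2) (RatFunc ℂ))
    (hGu : ∀ i j, IsUnit (G i j))
    (hGmem : ∀ i j k l, MemLocalization (f i * f j) (G i j k l))
    (hGinv : ∀ i j k l, MemLocalization (f i * f j) ((G i j)⁻¹ k l))
    (hGd : ∀ i, G i i = 1)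
    (hGc : ∀ i j k, G i j * G j k = G i k) :
    ∃ A : ι → Matrix (Fin 2) (Fin 2) (RatFunc ℂ),
      (∀ i, IsUnit (A i)) ∧
      (∀ i k l, MemLocalization (f i) (A i k l)) ∧
      (∀ i k l, MemLocalization (f i) ((A i)⁻¹ k l)) ∧
      (∀ i j, (A i)⁻¹ * G i j * A j = 1) := by
  classical
  obtain ⟨i₀, -⟩ := hroot 0
  haveI : Fintype ι := Fintype.ofFinite ι
  -- uniform exponent
  obtain ⟨n₀, hn₀⟩ : ∃ n₀ : ℕ, ∀ i j k l, ∃ p, G i j k l = ML.af p / ML.af (f i * f j) ^ n₀ := by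
    choose p n hpn using hGmem
    let Nf : ι × ι × Fin 2 × Fin 2 → ℕ := fun x => n x.1 x.2.1 x.2.2.1 x.2.2.2
    refine ⟨Finset.univ.sup Nf, fun i j k l => ?_⟩
    exact ML.raise (mul_ne_zero (hf i) (hf j))
      (Finset.le_sup (f := Nf) (Finset.mem_univ (i, j, k, l))) (hpn i j k l)
  have hGG : ∀ i j, G i j * G j i = 1 := fun i j => by rw [hGc i j i, hGd]
  -- the submodule of global sections (in the i₀ chart)
  let P : ι → (Fin 2 → RatFunc ℂ) → Prop := fun i v => ∀ k, MemLocalization (f i) ((G i i₀ *ᵥ v) k)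
  have Psmul : ∀ i (c : Polynomial ℂ) v, P i v → P i (c • v) := by
    intro i cc v hv k
    rw [Matrix.mulVec_smul]
    simpa [Pi.smul_apply, Algebra.smul_def] using ML.smul (hf i) (hv k)
  let M : Submodule (Polynomial ℂ) (Fin 2 → RatFunc ℂ) :=
    { carrier := {v | ∀ i, P i v}
      add_mem' := fun {a b} ha hb i k => by
        rw [Matrix.mulVec_add]; exact ML.add (hf i) (ha i k) (hb i k)
      zero_mem' := fun i k => by rw [Matrix.mulVec_zero]; exact ML.zero _
      smul_mem' := fun c v hv i => Psmul i c v (hv i) }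
  -- the upper lattice bound
  set c : RatFunc ℂ := ML.af (f i₀ ^ n₀) with hc
  have hc0 : c ≠ 0 := ML.af_ne (pow_ne_zero _ (hf i₀))
  let vv : Fin 2 → (Fin 2 → RatFunc ℂ) := fun k => c⁻¹ • (Pi.single k 1 : Fin 2 → RatFunc ℂ)
  have hspan : M ≤ Submodule.span (Polynomial ℂ) (Set.range vv) := by
    intro v hv
    have hpoly : ∀ k : Fin 2, ∃ p : Polynomial ℂ, c * v k = ML.af p := by
      intro k
      apply ML.eq_polynomial hroot
      intro i
      have hvv : v = G i₀ i *ᵥ (G i i₀ *ᵥ v) := by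
        rw [Matrix.mulVec_mulVec, hGG, Matrix.one_mulVec]
      have hexp : c * v k = ∑ l, (c * G i₀ i k l) * ((G i i₀ *ᵥ v) l) := by
        conv_lhs => rw [hvv]
        rw [show (G i₀ i *ᵥ (G i i₀ *ᵥ v)) k = ∑ l, G i₀ i k l * (G i i₀ *ᵥ v) l from rfl,
          Finset.mul_sum]
        refine Finset.sum_congr rfl fun l _ => by ring
      rw [hexp]
      refine ML.sum (hf i) fun l => ML.mul (hf i) ?_ (hv i l)
      obtain ⟨p, hp⟩ := hn₀ i₀ i k l
      have h2 := ML.shift' (hf i₀) hp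
      rwa [hc, map_pow]
    choose p hp using hpoly
    have hveq : v = ∑ k, p k • vv k := by
      funext j
      have h1 : v j = c⁻¹ * ML.af (p j) := (eq_inv_mul_iff_mul_eq₀ hc0).mpr (hp j)
      rw [h1]
      simp only [vv, Finset.sum_apply, Pi.smul_apply]
      simp only [Algebra.smul_def, smul_eq_mul, Pi.single_apply, mul_ite, mul_one, mul_zero,
        Algebra.algebraMap_self_apply, Finset.sum_ite_eq, Finset.sum_ite_eq', Finset.mem_univ, if_true]
      ring
    rw [hveq]
    exact Submodule.sum_mem _ fun k _ => Submodule.smul_mem _ _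
      (Submodule.subset_span ⟨k, rfl⟩)
  have hli : LinearIndependent (Polynomial ℂ) vv := by
    rw [Fintype.linearIndependent_iff]
    intro g hg k
    have h1 := congrFun hg k
    simp only [vv, Finset.sum_apply, Pi.smul_apply] at h1
    simp only [Algebra.smul_def, smul_eq_mul, Pi.single_apply, mul_ite, mul_one, mul_zero,
      Algebra.algebraMap_self_apply, Finset.sum_ite_eq, Algebra.algebraMap_self_apply, Finset.sum_ite_eq, Finset.sum_ite_eq', Finset.mem_univ, if_true, Pi.zero_apply] at h1
    have h2 : ML.af (g k) = 0 := by
      rcases mul_eq_zero.mp h1 with h | h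
      · exact h
      · exact absurd h (inv_ne_zero hc0)
    by_contra hne
    exact ML.af_ne hne h2
  obtain ⟨n, bas⟩ := Submodule.basisOfPidOfLESpan hli hspan
  -- the lower lattice bound and n = 2
  set q : Polynomial ℂ := (f i₀ * ∏ j, f j) ^ n₀ with hq
  have hq0 : q ≠ 0 := pow_ne_zero _ (mul_ne_zero (hf i₀) (Finset.prod_ne_zero_iff.mpr fun j _ => hf j))
  let u : Fin 2 → (Fin 2 → RatFunc ℂ) := fun k => ML.af q • (Pi.single k 1 : Fin 2 → RatFunc ℂ)
  have hu : ∀ k, u k ∈ M := by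
    intro k i j
    rw [Matrix.mulVec_smul, Pi.smul_apply]
    have hsingle : (G i i₀ *ᵥ (Pi.single k 1 : Fin 2 → RatFunc ℂ)) j = G i i₀ j k := by
      rw [Matrix.mulVec_single_one, Matrix.col_apply]
    rw [hsingle, smul_eq_mul]
    obtain ⟨p, hp⟩ := hn₀ i i₀ j k
    have hdvd : (f i * f i₀) ^ n₀ ∣ q := by
      rw [hq]
      apply pow_dvd_pow_of_dvd
      rw [mul_comm (f i)]
      exact mul_dvd_mul_left _ (Finset.dvd_prod_of_mem f (Finset.mem_univ i))
    obtain ⟨r, hr⟩ := hdvd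
    refine ⟨r * p, 0, ?_⟩
    have hin : ML.af (f i * f i₀) ^ n₀ * (ML.af p / ML.af (f i * f i₀) ^ n₀) = ML.af p := by
      rw [mul_comm]
      exact div_mul_cancel₀ _ (pow_ne_zero _ (ML.af_ne (mul_ne_zero (hf i) (hf i₀))))
    rw [pow_zero, div_one, hp, hr, map_mul, map_pow,
      mul_comm (ML.af ((f i * f i₀)) ^ n₀) (ML.af r), mul_assoc, hin, ← map_mul]
  have hn2 : n = 2 := by
    have hge : 2 ≤ n := by
      have hum : LinearIndependent (Polynomial ℂ) (fun k => (⟨u k, hu k⟩ : M)) := by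
        rw [Fintype.linearIndependent_iff]
        intro g hg k
        have h0 : (∑ x : Fin 2, g x • u x) = 0 := by
          have h0' := congrArg (Subtype.val) hg
          simpa using h0'
        have h1 := congrFun h0 k
        simp only [u, Finset.sum_apply, Pi.smul_apply] at h1
        simp only [Algebra.smul_def, smul_eq_mul, Pi.single_apply, mul_ite, mul_one, mul_zero,
          Algebra.algebraMap_self_apply, Finset.sum_ite_eq, Finset.sum_ite_eq', Finset.mem_univ,
          if_true, Pi.zero_apply] at h1
        rcases mul_eq_zero.mp h1 with h | h
        · by_contra hne; exact ML.af_ne hne h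
        · exact absurd h (ML.af_ne hq0)
      simpa using bas.card_le_card_of_linearIndependent hum
    have hle : n ≤ 2 := by
      have h1 : LinearIndependent (Polynomial ℂ) (fun t => (bas t : Fin 2 → RatFunc ℂ)) :=
        bas.linearIndependent.map' M.subtype M.ker_subtype
      have h2 : LinearIndependent (RatFunc ℂ) (fun t => (bas t : Fin 2 → RatFunc ℂ)) :=
        (LinearIndependent.iff_fractionRing (Polynomial ℂ) (RatFunc ℂ)).mp h1
      have h3 := h2.fintype_card_le_finrank
      simpa using h3
    omega
  subst hn2
  -- the trivializing matrices
  let A₀ : Matrix (Fin 2) (Fin 2) (RatFunc ℂ) := Matrix.of fun r c => (bas c : Fin 2 → RatFunc ℂ) r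
  let A : ι → Matrix (Fin 2) (Fin 2) (RatFunc ℂ) := fun i => G i i₀ * A₀
  -- every element of N_i is an R_i-combination of the basis
  have hNspan : ∀ i v, P i v → ∃ r : Fin 2 → RatFunc ℂ,
      (∀ t, MemLocalization (f i) (r t)) ∧ v = ∑ t, r t • (bas t : Fin 2 → RatFunc ℂ) := by
    intro i v hv
    have step : ∀ j k, ∃ m : ℕ, MemLocalization (f j) (ML.af (f i) ^ m * (G j i₀ *ᵥ v) k) := by
      intro j k
      have hrw : G j i₀ *ᵥ v = G j i *ᵥ (G i i₀ *ᵥ v) := by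
        rw [Matrix.mulVec_mulVec, hGc]
      have hm2 : MemLocalization (f i * f j) ((G j i₀ *ᵥ v) k) := by
        rw [mul_comm (f i), hrw,
          show (G j i *ᵥ (G i i₀ *ᵥ v)) k = ∑ l, G j i k l * (G i i₀ *ᵥ v) l from rfl]
        refine ML.sum (mul_ne_zero (hf j) (hf i)) fun l =>
          ML.mul (mul_ne_zero (hf j) (hf i)) (hGmem j i k l) ?_
        exact ML.of_dvd (mul_ne_zero (hf j) (hf i)) (dvd_mul_left (f i) (f j)) (hv l)
      exact ML.shift (hf i) hm2
    choose m hm using step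
    set mm := Finset.univ.sup (fun x : ι × Fin 2 => m x.1 x.2) with hmm
    have hstep : ∀ j k, MemLocalization (f j) (ML.af (f i) ^ mm * (G j i₀ *ᵥ v) k) := by
      intro j k
      have hle : m j k ≤ mm :=
        Finset.le_sup (f := fun x : ι × Fin 2 => m x.1 x.2) (Finset.mem_univ (j, k))
      have heq : ML.af (f i) ^ mm * (G j i₀ *ᵥ v) k
          = ML.af (f i ^ (mm - m j k)) * (ML.af (f i) ^ (m j k) * (G j i₀ *ᵥ v) k) := by
        rw [map_pow, ← mul_assoc, ← pow_add, Nat.sub_add_cancel hle]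
      rw [heq]
      exact ML.smul (hf j) (hm j k)
    have hvM : (f i ^ mm : Polynomial ℂ) • v ∈ M := by
      intro j k
      rw [Matrix.mulVec_smul, Pi.smul_apply, Algebra.smul_def, map_pow]
      exact hstep j k
    set w : M := ⟨(f i ^ mm : Polynomial ℂ) • v, hvM⟩ with hw
    have hrep := bas.sum_repr w
    have hrep' : (f i ^ mm : Polynomial ℂ) • v
        = ∑ t, (bas.repr w t : Polynomial ℂ) • (bas t : Fin 2 → RatFunc ℂ) := by
      have h0 := congrArg (Subtype.val) hrep
      rw [Submodule.coe_sum] at h0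
      simp only [Submodule.coe_smul] at h0
      exact h0.symm
    have hfim : ML.af (f i) ^ mm ≠ 0 := pow_ne_zero _ (ML.af_ne (hf i))
    have hKsm : ∀ (pp : Polynomial ℂ) (x : Fin 2 → RatFunc ℂ), (pp • x) = ML.af pp • x :=
      fun pp x => (algebraMap_smul (RatFunc ℂ) pp x).symm
    refine ⟨fun t => (ML.af (f i) ^ mm)⁻¹ * ML.af (bas.repr w t),
      fun t => ML.mul (hf i) (ML.inv_pow_mem mm) (ML.poly _ _), ?_⟩
    calc v = (ML.af (f i) ^ mm)⁻¹ • ((f i ^ mm : Polynomial ℂ) • v) := by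
            rw [hKsm, map_pow, inv_smul_smul₀ hfim]
      _ = ∑ t, ((ML.af (f i) ^ mm)⁻¹ * ML.af (bas.repr w t)) • (bas t : Fin 2 → RatFunc ℂ) := by
            rw [hrep', Finset.smul_sum]
            refine Finset.sum_congr rfl fun t _ => ?_
            rw [hKsm, smul_smul]
  have hcol : ∀ i t, (fun j => A i j t) = G i i₀ *ᵥ (bas t : Fin 2 → RatFunc ℂ) := by
    intro i t; rfl
  have hAmem : ∀ i k l, MemLocalization (f i) (A i k l) := by
    intro i k l
    have h1 : A i k l = (G i i₀ *ᵥ (bas l : Fin 2 → RatFunc ℂ)) k := congrFun (hcol i l) k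
    rw [h1]
    exact (bas l).2 i k
  -- right inverse with entries in R_i
  have hC : ∀ i, ∃ C : Matrix (Fin 2) (Fin 2) (RatFunc ℂ),
      (∀ k l, MemLocalization (f i) (C k l)) ∧ A i * C = 1 := by
    intro i
    have hP : ∀ k : Fin 2, P i (G i₀ i *ᵥ (Pi.single k 1 : Fin 2 → RatFunc ℂ)) := by
      intro k l
      rw [Matrix.mulVec_mulVec, hGG, Matrix.one_mulVec]
      rcases eq_or_ne l k with h | h
      · subst h; rw [Pi.single_eq_same]; exact ML.one _
      · rw [Pi.single_eq_of_ne h]; exact ML.zero _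
    choose r hrmem hrep using fun k => hNspan i _ (hP k)
    refine ⟨Matrix.of (fun t k => r k t), fun t k => hrmem _ _, ?_⟩
    ext j k
    have hlin : G i i₀ *ᵥ (∑ t, r k t • (bas t : Fin 2 → RatFunc ℂ))
        = ∑ t, r k t • (G i i₀ *ᵥ (bas t : Fin 2 → RatFunc ℂ)) := by
      rw [← Matrix.mulVecLin_apply, map_sum]
      simp only [map_smul, Matrix.mulVecLin_apply]
    have h2 : (A i * Matrix.of (fun t k => r k t)) j k
        = (G i i₀ *ᵥ (∑ t, r k t • (bas t : Fin 2 → RatFunc ℂ))) j := by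
      rw [hlin, Matrix.mul_apply, Finset.sum_apply]
      refine Finset.sum_congr rfl fun t _ => ?_
      rw [Pi.smul_apply, smul_eq_mul, ← congrFun (hcol i t) j, Matrix.of_apply]
      ring
    rw [h2, ← hrep k, Matrix.mulVec_mulVec, hGG, Matrix.one_mulVec, Matrix.one_apply,
      Pi.single_apply]
  choose C hCmem hAC using hC
  have hAu : ∀ i, IsUnit (A i) := by
    intro i
    rw [Matrix.isUnit_iff_isUnit_det]
    exact IsUnit.of_mul_eq_one _ (by rw [← Matrix.det_mul, hAC i, Matrix.det_one])
  have hAinv : ∀ i, (A i)⁻¹ = C i := fun i => Matrix.inv_eq_right_inv (hAC i)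
  have hA0u : IsUnit A₀ := by
    have : A i₀ = A₀ := by simp only [A, hGd, Matrix.one_mul]
    rw [← this]; exact hAu i₀
  refine ⟨A, hAu, hAmem, ?_, ?_⟩
  · intro i k l; rw [hAinv i]; exact hCmem i k l
  · intro i j
    have h1 : (A i)⁻¹ = A₀⁻¹ * G i₀ i := by
      rw [show A i = G i i₀ * A₀ from rfl, Matrix.mul_inv_rev,
        Matrix.inv_eq_right_inv (hGG i i₀)]
    rw [h1, show A j = G j i₀ * A₀ from rfl]
    calc A₀⁻¹ * G i₀ i * G i j * (G j i₀ * A₀)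
        = A₀⁻¹ * (G i₀ i * G i j * G j i₀) * A₀ := by
          simp only [Matrix.mul_assoc]
      _ = A₀⁻¹ * A₀ := by rw [hGc, hGc, hGd, Matrix.mul_one]
      _ = 1 := Matrix.nonsing_inv_mul _ ((Matrix.isUnit_iff_isUnit_det A₀).mp hA0u)
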